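/- Let A be the 4th-order 2-dimensional real tensor with all entries zero except A_{1111}=A_{2112}=1. Then for every λ ∈ [0,1], λ is a real Z-eigenvalue of A; in particular A has infinitely many real Z-eigenvalues. -/
import Mathlib


open Finset

/-- For a 4th-order 2-dimensional tensor `A`, `(A x³)_j = ∑ A_{j i₂ i₃ i₄} x_{i₂} x_{i₃} x_{i₄}`. -/
noncomputable def app3 (A : Fin 2 → Fin 2 → Fin 2 → Fin 2 → ℝ) (x : Fin 2 → ℝ) :
    Fin 2 → ℝ :=
  fun j => ∑ a : Fin 2, ∑ b : Fin 2, ∑ c : Fin 2, A j a b c * x a * x b * x c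

/-- The tensor with `A_{1111} = A_{2112} = 1` and all other entries zero. -/
noncomputable def B0 : Fin 2 → Fin 2 → Fin 2 → Fin 2 → ℝ := fun i j k l =>
  if (i, j, k, l) = (0, 0, 0, 0) ∨ (i, j, k, l) = (1, 0, 0, 1) then 1 else 0

lemma key : ∀ lam ∈ Set.Icc (0 : ℝ) 1, ∃ u : Fin 2 → ℝ,
    u 0 ^ 2 + u 1 ^ 2 = 1 ∧ ∀ j, app3 B0 u j = lam * u j := by
  rintro lam ⟨h0, h1⟩
  refine ⟨![Real.sqrt lam, Real.sqrt (1 - lam)], ?_, ?_⟩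
  · simp [Real.sq_sqrt h0, Real.sq_sqrt (by linarith : (0:ℝ) ≤ 1 - lam)]
  · have hs : Real.sqrt lam * Real.sqrt lam = lam := Real.mul_self_sqrt h0
    intro j
    fin_cases j <;>
      simp [app3, B0, Fin.sum_univ_two, Prod.ext_iff] <;> exact Or.inl hs

/-- Every `λ ∈ [0,1]` is a real Z-eigenvalue of `B0`; in particular `B0` has infinitely many
real Z-eigenvalues. -/
theorem stmt2 :
    (∀ lam ∈ Set.Icc (0 : ℝ) 1, ∃ u : Fin 2 → ℝ,
        u 0 ^ 2 + u 1 ^ 2 = 1 ∧ ∀ j, app3 B0 u j = lam * u j) ∧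
    {lam : ℝ | ∃ u : Fin 2 → ℝ,
        u 0 ^ 2 + u 1 ^ 2 = 1 ∧ ∀ j, app3 B0 u j = lam * u j}.Infinite := by
  refine ⟨key, Set.Infinite.mono (fun lam h => key lam h) ?_⟩
  exact Set.Icc_infinite (by norm_num : (0:ℝ) < 1)
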